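/- arXiv:2308.05876 — 8 statements merged into one kernel-verified Lean document; each statement's English description precedes it below -/
import Mathlib

section
/- Let A and B be nonempty types, let F, G : A × B → ℝ, and let w be a nonzero real number. Then the following are equivalent: (i) for all a, a' ∈ A and all b ∈ B, F(a,b) − F(a',b) = w · (G(a,b) − G(a',b)); (ii) there exists a function Θ : B → ℝ such that F(a,b) = w · G(a,b) + Θ(b) for all a ∈ A and b ∈ B. -/
/-- The weighted potential difference condition holds for `F` with respect
to `G` and nonzero weight `w` iff `F` decomposes as `w • G` plus a term depending
only on the second variable. -/
theorem weighted_potential_difference_iff_decomposition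
    {A B : Type*} [Nonempty A] [Nonempty B]
    (F G : A × B → ℝ) (w : ℝ) (hw : w ≠ 0) :
    (∀ (a a' : A) (b : B), F (a, b) - F (a', b) = w * (G (a, b) - G (a', b)))
      ↔ ∃ Θ : B → ℝ, ∀ (a : A) (b : B), F (a, b) = w * G (a, b) + Θ b := by
  constructor
  · intro h
    obtain ⟨a0⟩ := ‹Nonempty A›
    refine ⟨fun b => F (a0, b) - w * G (a0, b), fun a b => ?_⟩
    have := h a a0 b
    ring_nf
    ring_nf at this
    linarith
  · rintro ⟨Θ, hΘ⟩ a a' b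
    rw [hΘ a b, hΘ a' b]; ring
end

section
/- Fix T ≥ 1 and types X₁, U₁, X₂, U₂. For each k ∈ {0,…,T−1} let L¹¹_k : X₁ × U₁ → ℝ, L²²_k : X₂ × U₂ → ℝ, L¹²_k : X₁ × X₂ → ℝ, L²¹_k : X₂ × X₁ → ℝ with L²¹_k(x₂,x₁) = L¹²_k(x₁,x₂) for all x₁,x₂, and similarly terminal costs L¹¹_T : X₁ → ℝ, L²²_T : X₂ → ℝ, L¹²_T : X₁ × X₂ → ℝ, L²¹_T : X₂ × X₁ → ℝ with L²¹_T(x₂,x₁) = L¹²_T(x₁,x₂); let c¹_k > 0, c²_k > 0 for k ∈ {0,…,T}. Define agent 1's total cost J¹ of a trajectory (x¹,x²,u¹,u²) as L¹¹_T(x¹_T) + c¹_T·L¹²_T(x¹_T,x²_T) + Σ_{k<T}[L¹¹_k(x¹_k,u¹_k) + c¹_k·L¹²_k(x¹_k,x²_k)], and the potential P as L_T + Σ_{k<T} L_k where L_k = c²_k·L¹¹_k(x¹_k,u¹_k) + c¹_k·L²²_k(x²_k,u²_k) + c¹_k·c²_k·L¹²_k(x¹_k,x²_k) and L_T = c²_T·L¹¹_T(x¹_T)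 + c¹_T·L²²_T(x²_T) + c¹_T·c²_T·L¹²_T(x¹_T,x²_T). Then for any two trajectories (x¹,x²,u¹,u²) and (x'¹,x²,u'¹,u²) that agree in agent 2's states and actions at every time step, J¹(x¹,x²,u¹,u²) − J¹(x'¹,x²,u'¹,u²) = (1/c²_T)·(L_T(x¹_T,x²_T) − L_T(x'¹_T,x²_T)) + Σ_{k<T} (1/c²_k)·(L_k(x¹_k,x²_k,u¹_k,u²_k) − L_k(x'¹_k,x²_k,u'¹_k,u²_k)); symmetrically, agent 2's total cost J² = L²²_T(x²_T) + c²_T·L²¹_T(x²_T,x¹_T) + Σ_{k<T}[L²²_k(x²_k,u²_k) + c²_k·L²¹_k(x²_k,x¹_k)] satisfies the analogous identity with weights 1/c¹_k when agent 1's components are held fixed. -/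
/-- Lemma 3 of the paper: a dyadic interaction with stage-wise costs
`Lⁱ_k = Lⁱⁱ_k + cⁱ_k·Lⁱʲ_k` and symmetric inter-agent costs is a weighted constrained
potential dynamic game with weights `w¹_k = 1/c²_k` and `w²_k = 1/c¹_k`: the difference
of each agent's total cost under a unilateral change equals the corresponding weighted
sum of the potential's stage-cost differences. -/
theorem dyadic_weighted_potential_game
    (T : ℕ) (hT : 1 ≤ T) {X₁ U₁ X₂ U₂ : Type*}
    (L11 : Fin T → X₁ × U₁ → ℝ) (L22 : Fin T → X₂ × U₂ → ℝ)
    (L12 : Fin T → X₁ × X₂ → ℝ) (L21 : Fin T → X₂ × X₁ → ℝ)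
    (L11T : X₁ → ℝ) (L22T : X₂ → ℝ) (L12T : X₁ × X₂ → ℝ) (L21T : X₂ × X₁ → ℝ)
    (hsym : ∀ (k : Fin T) (x₁ : X₁) (x₂ : X₂), L21 k (x₂, x₁) = L12 k (x₁, x₂))
    (hsymT : ∀ (x₁ : X₁) (x₂ : X₂), L21T (x₂, x₁) = L12T (x₁, x₂))
    (c₁ c₂ : Fin (T + 1) → ℝ) (hc₁ : ∀ k, 0 < c₁ k) (hc₂ : ∀ k, 0 < c₂ k) :
    -- total costs
    (∀ (J1 : (Fin (T + 1) → X₁) → (Fin (T + 1) → X₂) → (Fin T → U₁) → (Fin T → U₂) → ℝ),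
      (∀ x1 x2 u1 u2, J1 x1 x2 u1 u2 =
        L11T (x1 (Fin.last T)) + c₁ (Fin.last T) * L12T (x1 (Fin.last T), x2 (Fin.last T))
          + ∑ k : Fin T, (L11 k (x1 k.castSucc, u1 k)
              + c₁ k.castSucc * L12 k (x1 k.castSucc, x2 k.castSucc))) →
      ∀ (L : Fin T → X₁ → X₂ → U₁ → U₂ → ℝ) (LT : X₁ → X₂ → ℝ),
      (∀ k a b p q, L k a b p q =
        c₂ k.castSucc * L11 k (a, p) + c₁ k.castSucc * L22 k (b, q)
          + c₁ k.castSucc * c₂ k.castSucc * L12 k (a, b)) →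
      (∀ a b, LT a b =
        c₂ (Fin.last T) * L11T a + c₁ (Fin.last T) * L22T b
          + c₁ (Fin.last T) * c₂ (Fin.last T) * L12T (a, b)) →
      -- agent 1's unilateral deviations
      (∀ (x1 x1' : Fin (T + 1) → X₁) (x2 : Fin (T + 1) → X₂)
          (u1 u1' : Fin T → U₁) (u2 : Fin T → U₂),
        J1 x1 x2 u1 u2 - J1 x1' x2 u1' u2
          = (1 / c₂ (Fin.last T)) * (LT (x1 (Fin.last T)) (x2 (Fin.last T))
              - LT (x1' (Fin.last T)) (x2 (Fin.last T)))
            + ∑ k : Fin T, (1 / c₂ k.castSucc)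
                * (L k (x1 k.castSucc) (x2 k.castSucc) (u1 k) (u2 k)
                   - L k (x1' k.castSucc) (x2 k.castSucc) (u1' k) (u2 k))))
    ∧
    (∀ (J2 : (Fin (T + 1) → X₁) → (Fin (T + 1) → X₂) → (Fin T → U₁) → (Fin T → U₂) → ℝ),
      (∀ x1 x2 u1 u2, J2 x1 x2 u1 u2 =
        L22T (x2 (Fin.last T)) + c₂ (Fin.last T) * L21T (x2 (Fin.last T), x1 (Fin.last T))
          + ∑ k : Fin T, (L22 k (x2 k.castSucc, u2 k)
              + c₂ k.castSucc * L21 k (x2 k.castSucc, x1 k.castSucc))) →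
      ∀ (L : Fin T → X₁ → X₂ → U₁ → U₂ → ℝ) (LT : X₁ → X₂ → ℝ),
      (∀ k a b p q, L k a b p q =
        c₂ k.castSucc * L11 k (a, p) + c₁ k.castSucc * L22 k (b, q)
          + c₁ k.castSucc * c₂ k.castSucc * L12 k (a, b)) →
      (∀ a b, LT a b =
        c₂ (Fin.last T) * L11T a + c₁ (Fin.last T) * L22T b
          + c₁ (Fin.last T) * c₂ (Fin.last T) * L12T (a, b)) →
      -- agent 2's unilateral deviations
      (∀ (x1 : Fin (T + 1) → X₁) (x2 x2' : Fin (T + 1) → X₂)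
          (u1 : Fin T → U₁) (u2 u2' : Fin T → U₂),
        J2 x1 x2 u1 u2 - J2 x1 x2' u1 u2'
          = (1 / c₁ (Fin.last T)) * (LT (x1 (Fin.last T)) (x2 (Fin.last T))
              - LT (x1 (Fin.last T)) (x2' (Fin.last T)))
            + ∑ k : Fin T, (1 / c₁ k.castSucc)
                * (L k (x1 k.castSucc) (x2 k.castSucc) (u1 k) (u2 k)
                   - L k (x1 k.castSucc) (x2' k.castSucc) (u1 k) (u2' k)))) := by

  constructor
  · intro J1 hJ1 L LT hL hLT x1 x1' x2 u1 u1' u2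
    rw [hJ1, hJ1]
    have hc2T := (hc₂ (Fin.last T)).ne'
    have hterm : ∀ k ∈ Finset.univ, (1 / c₂ (Fin.castSucc k))
        * (L k (x1 k.castSucc) (x2 k.castSucc) (u1 k) (u2 k)
           - L k (x1' k.castSucc) (x2 k.castSucc) (u1' k) (u2 k))
        = (L11 k (x1 k.castSucc, u1 k) + c₁ k.castSucc * L12 k (x1 k.castSucc, x2 k.castSucc))
          - (L11 k (x1' k.castSucc, u1' k) + c₁ k.castSucc * L12 k (x1' k.castSucc, x2 k.castSucc)) := by
      intro k _
      have hc2 := (hc₂ (Fin.castSucc k)).ne'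
      rw [hL, hL]
      field_simp
      ring
    rw [Finset.sum_congr rfl hterm, Finset.sum_sub_distrib, hLT, hLT]
    field_simp
    ring
  · intro J2 hJ2 L LT hL hLT x1 x2 x2' u1 u2 u2'
    rw [hJ2, hJ2]
    have hc1T := (hc₁ (Fin.last T)).ne'
    have hterm : ∀ k ∈ Finset.univ, (1 / c₁ (Fin.castSucc k))
        * (L k (x1 k.castSucc) (x2 k.castSucc) (u1 k) (u2 k)
           - L k (x1 k.castSucc) (x2' k.castSucc) (u1 k) (u2' k))
        = (L22 k (x2 k.castSucc, u2 k) + c₂ k.castSucc * L21 k (x2 k.castSucc, x1 k.castSucc))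
          - (L22 k (x2' k.castSucc, u2' k) + c₂ k.castSucc * L21 k (x2' k.castSucc, x1 k.castSucc)) := by
      intro k _
      have hc1 := (hc₁ (Fin.castSucc k)).ne'
      rw [hL, hL, hsym, hsym]
      field_simp
      ring
    rw [Finset.sum_congr rfl hterm, Finset.sum_sub_distrib, hLT, hLT, hsymT, hsymT]
    field_simp
    ring
end

section
/- Fix N ≥ 1 and for each i ∈ Fin N types X_i (states) and U_i (actions). Let L^{ii} : X_i × U_i → ℝ for each i, let L^{ij} : X_i × X_j → ℝ for each pair i ≠ j with the symmetry L^{ij}(a,b) = L^{ji}(b,a), and let c_i > 0 be real numbers. Define agent i's stage cost L^i(x,u) = L^{ii}(x_i,u_i) + c_i·Σ_{j≠i} L^{ij}(x_i,x_j), the weight w_i = 1/Π_{j≠i} c_j, and the potential stage cost L(x,u) = Σ_i (Π_{j≠i} c_j)·L^{ii}(x_i,u_i) + (Π_l c_l)·Σ_{i<j} L^{ij}(x_i,x_j). Then for every i ∈ Fin N there exists a function Θ_i of the tuple ((x_j,u_j))_{j≠i} such that L^i(x,u) = w_i·L(x,u) + Θ_i((x_j)_{j≠i},(u_j)_{j≠i})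 for all x ∈ Π_j X_j and u ∈ Π_j U_j. -/
open Finset

/-- Splitting a sum over ordered pairs at a distinguished index `i`, for a
symmetric function `F`. -/
lemma split_pairs {N : ℕ} (i : Fin N) (F : Fin N → Fin N → ℝ)
    (hF : ∀ l j, F l j = F j l) :
    ∑ l : Fin N, ∑ j ∈ Finset.univ.filter (fun j => l < j), F l j
      = (∑ l ∈ Finset.univ.erase i,
          ∑ j ∈ (Finset.univ.erase i).filter (fun j => l < j), F l j)
        + ∑ j ∈ Finset.univ.erase i, F i j := by
  have hsf : ∀ (s : Finset (Fin N)) (l : Fin N),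
      ∑ j ∈ s.filter (fun j => l < j), F l j = ∑ j ∈ s, if l < j then F l j else 0 := by
    intro s l; rw [Finset.sum_filter]
  simp only [hsf]
  have herase : ∀ (g : Fin N → ℝ),
      ∑ j ∈ Finset.univ.erase i, g j = (∑ j : Fin N, g j) - g i := by
    intro g
    have := Finset.add_sum_erase Finset.univ g (Finset.mem_univ i)
    linarith
  rw [herase (fun l => ∑ j ∈ Finset.univ.erase i, if l < j then F l j else 0)]
  simp only [herase]
  have key : ∀ l : Fin N,
      (∑ j : Fin N, if l < j then F l j else 0) - (if l < i then F l i else 0)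
        = (∑ j : Fin N, if l < j then F l j else 0) - (if l < i then F l i else 0) := fun _ => rfl
  -- rearrange: suffices to show
  -- (∑ l, ∑ j, ite) = (∑ l, (∑ j, ite) - ite(l<i)(F l i)) - ((∑ j, ite(i<j)) - ite(i<i))
  --                    + (∑ j, F i j) - F i i  ... handle algebraically
  have hii : (if i < i then F i i else (0:ℝ)) = 0 := by simp
  rw [Finset.sum_sub_distrib]
  have htri : (∑ l : Fin N, if l < i then F l i else 0)
      + (∑ j : Fin N, if i < j then F i j else 0)
      = (∑ j : Fin N, F i j) - F i i := by
    rw [← Finset.sum_add_distrib]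
    have : ∀ j : Fin N,
        ((if j < i then F j i else 0) + (if i < j then F i j else 0))
          = F i j - (if j = i then F i i else 0) := by
      intro j
      rcases lt_trichotomy j i with h | h | h
      · simp [h, not_lt.mpr h.le, h.ne, hF j i]
      · simp [h]
      · simp [h, not_lt.mpr h.le, h.ne']
    rw [Finset.sum_congr rfl fun j _ => this j, Finset.sum_sub_distrib,
      Finset.sum_ite_eq' Finset.univ i (fun _ => F i i)]
    simp
  rw [hii]
  linarith
/-- stage-wise decomposition underlying Lemma 4 of the paper: when each
agent `i` applies the same positive coefficient `c i` to its inter-agent costs with all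
other agents, and inter-agent costs are symmetric, each agent's stage cost equals
`w i = 1/∏_{j≠i} c j` times a common potential stage cost plus a term independent of
the agent's own state and action. -/
theorem multiagent_own_coefficient_stagewise_decomposition
    {N : ℕ} (hN : 1 ≤ N)
    (X U : Fin N → Type*)
    (Lii : ∀ i : Fin N, X i × U i → ℝ)
    (Lij : ∀ i j : Fin N, X i × X j → ℝ)
    (hsym : ∀ (i j : Fin N), i ≠ j → ∀ (a : X i) (b : X j), Lij i j (a, b) = Lij j i (b, a))
    (c : Fin N → ℝ) (hc : ∀ i, 0 < c i) :
    ∀ i : Fin N,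
      ∃ Θ : ((j : {j : Fin N // j ≠ i}) → X j.1) → ((j : {j : Fin N // j ≠ i}) → U j.1) → ℝ,
        ∀ (x : ∀ j, X j) (u : ∀ j, U j),
          Lii i (x i, u i) + c i * ∑ j ∈ Finset.univ.erase i, Lij i j (x i, x j)
            = (1 / ∏ j ∈ Finset.univ.erase i, c j)
                * (∑ l : Fin N, (∏ j ∈ Finset.univ.erase l, c j) * Lii l (x l, u l)
                   + (∏ l : Fin N, c l)
                       * ∑ l : Fin N, ∑ j ∈ Finset.univ.filter (fun j => l < j),
                           Lij l j (x l, x j))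
              + Θ (fun j => x j.1) (fun j => u j.1) := by
  intro i
  set P : ℝ := ∏ j ∈ Finset.univ.erase i, c j with hPdef
  have hP : 0 < P := Finset.prod_pos fun j _ => hc j
  set C : ℝ := ∏ l : Fin N, c l with hCdef
  have hCP : C = c i * P := by
    rw [hPdef, hCdef, Finset.mul_prod_erase Finset.univ c (Finset.mem_univ i)]
  refine ⟨fun xr ur => -(1 / P) *
      ((∑ l : {j : Fin N // j ≠ i}, (∏ j ∈ Finset.univ.erase l.1, c j) * Lii l.1 (xr l, ur l))
        + C * ∑ l : {j : Fin N // j ≠ i}, ∑ j : {j : Fin N // j ≠ i},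
            if l.1 < j.1 then Lij l.1 j.1 (xr l, xr j) else 0), ?_⟩
  intro x u
  have hmem : ∀ z : Fin N, z ∈ Finset.univ.erase i ↔ z ≠ i := by
    intro z; simp [Finset.mem_erase]
  -- convert subtype sums to erase sums
  have h1 : (∑ l : {j : Fin N // j ≠ i},
        (∏ j ∈ Finset.univ.erase l.1, c j) * Lii l.1 (x l.1, u l.1))
      = ∑ l ∈ Finset.univ.erase i, (∏ j ∈ Finset.univ.erase l, c j) * Lii l (x l, u l) := by
    rw [Finset.sum_subtype (Finset.univ.erase i) hmem
      (fun l => (∏ j ∈ Finset.univ.erase l, c j) * Lii l (x l, u l))]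
  have h2 : (∑ l : {j : Fin N // j ≠ i}, ∑ j : {j : Fin N // j ≠ i},
        if l.1 < j.1 then Lij l.1 j.1 (x l.1, x j.1) else 0)
      = ∑ l ∈ Finset.univ.erase i,
          ∑ j ∈ (Finset.univ.erase i).filter (fun j => l < j), Lij l j (x l, x j) := by
    rw [Finset.sum_subtype (Finset.univ.erase i) hmem
      (fun l => ∑ j ∈ (Finset.univ.erase i).filter (fun j => l < j), Lij l j (x l, x j))]
    refine Finset.sum_congr rfl fun l _ => ?_
    rw [Finset.sum_filter, Finset.sum_subtype (Finset.univ.erase i) hmem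
      (fun j => if l.1 < j then Lij l.1 j (x l.1, x j) else 0)]
  simp only [h1, h2]
  -- apply split_pairs with F l j = Lij l j (x l, x j)
  have hFsym : ∀ l j : Fin N, Lij l j (x l, x j) = Lij j l (x j, x l) := by
    intro l j
    rcases eq_or_ne l j with rfl | h
    · rfl
    · exact hsym l j h (x l) (x j)
  have hsp := split_pairs i (fun l j => Lij l j (x l, x j)) hFsym
  have herase : ∑ l : Fin N, (∏ j ∈ Finset.univ.erase l, c j) * Lii l (x l, u l)
      = P * Lii i (x i, u i)
        + ∑ l ∈ Finset.univ.erase i, (∏ j ∈ Finset.univ.erase l, c j) * Lii l (x l, u l) := by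
    rw [← Finset.add_sum_erase Finset.univ _ (Finset.mem_univ i)]
  rw [herase, hsp]
  have hPne : P ≠ 0 := ne_of_gt hP
  field_simp
  ring_nf
  rw [hCP]
  ring
end

section
/- Fix N ≥ 1, T ≥ 1, and for each i ∈ Fin N types X_i and U_i. For each time step k ∈ {0,…,T−1} let L^{ii}_k : X_i × U_i → ℝ and L^{ij}_k : X_i × X_j → ℝ (i ≠ j) with L^{ij}_k(a,b) = L^{ji}_k(b,a), and for k = T let L^{ii}_T : X_i → ℝ and L^{ij}_T : X_i × X_j → ℝ with L^{ij}_T(a,b) = L^{ji}_T(b,a); let c^i_k > 0 for all i and all k ∈ {0,…,T}. Define agent i's total cost J^i of a trajectory ((x_k)_{k≤T},(u_k)_{k<T}) with x_k ∈ Π_j X_j, u_k ∈ Π_j U_j as L^{ii}_T(x_T(i)) + c^i_T·Σ_{j≠i} L^{ij}_T(x_T(i),x_T(j)) + Σ_{k<T}[L^{ii}_k(x_k(i),u_k(i)) + c^i_k·Σ_{j≠i} L^{ij}_k(x_k(i),x_k(j))], and define the potential stage costs L_k(x,u) = Σ_i (Π_{j≠i} c^j_k)·L^{ii}_k(x(i),u(i))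 + (Π_l c^l_k)·Σ_{i<j} L^{ij}_k(x(i),x(j)) with the analogous terminal L_T. Then for every i and any two trajectories that agree in all components of every player j ≠ i at every time step, J^i evaluated at the first trajectory minus J^i at the second equals w^i_T·(L_T difference) + Σ_{k<T} w^i_k·(L_k difference), where w^i_k = 1/Π_{j≠i} c^j_k. -/
lemma double_sum_eq {N : ℕ} (i : Fin N) (D : Fin N → Fin N → ℝ)
    (hD0 : ∀ l j, l ≠ i → j ≠ i → D l j = 0)
    (hDs : ∀ l j, l ≠ j → D l j = D j l) :
    ∑ l, ∑ j ∈ Finset.univ.filter (fun j => l < j), D l j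
      = ∑ j ∈ Finset.univ.erase i, D i j := by
  have hstep : ∀ l : Fin N, l ≠ i →
      ∑ j ∈ Finset.univ.filter (fun j => l < j), D l j = if l < i then D l i else 0 := by
    intro l hl
    have h1 : ∑ j ∈ Finset.univ.filter (fun j => l < j), D l j
        = ∑ j ∈ Finset.univ.filter (fun j => l < j), if j = i then D l i else 0 :=
      Finset.sum_congr rfl (fun j _ => by
        by_cases h : j = i
        · subst h; simp
        · rw [hD0 l j hl h]; simp [h])
    rw [h1, Finset.sum_ite_eq' _ i (fun _ => D l i)]
    simp [Finset.mem_filter]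
  rw [← Finset.sum_erase_add _ _ (Finset.mem_univ i)]
  have h2 : ∑ l ∈ Finset.univ.erase i, ∑ j ∈ Finset.univ.filter (fun j => l < j), D l j
      = ∑ l ∈ Finset.univ.erase i, if l < i then D l i else 0 :=
    Finset.sum_congr rfl (fun l hl => hstep l (Finset.ne_of_mem_erase hl))
  rw [h2]
  have h3 : ∑ l ∈ Finset.univ.erase i, (if l < i then D l i else 0)
      = ∑ l, if l < i then D l i else 0 :=
    Finset.sum_erase _ (by simp)
  rw [h3]
  have h4 : ∑ j ∈ Finset.univ.erase i, D i j
      = ∑ j, ((if j < i then D i j else 0) + (if i < j then D i j else 0)) := by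
    rw [← Finset.sum_erase (a := i) (f := fun j => (if j < i then D i j else 0) + (if i < j then D i j else 0)) _ (by simp)]
    refine Finset.sum_congr rfl (fun j hj => ?_)
    have hji : j ≠ i := Finset.ne_of_mem_erase hj
    rcases lt_or_gt_of_ne hji with h | h
    · simp [h, asymm h]
    · simp [h, asymm h]
  rw [h4, Finset.sum_add_distrib]
  have h5 : ∑ j, (if j < i then D i j else 0) = ∑ l, if l < i then D l i else 0 :=
    Finset.sum_congr rfl (fun j _ => by
      by_cases h : j < i
      · simp only [h, if_true]; exact hDs i j (ne_of_gt h)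
      · simp [h])
  rw [h5]
  congr 1
  exact Finset.sum_filter _ _


lemma stage_diff {N : ℕ} (i : Fin N) (c : Fin N → ℝ) (hc : ∀ j, 0 < c j)
    (A A' : Fin N → ℝ) (B B' : Fin N → Fin N → ℝ)
    (hA : ∀ j, j ≠ i → A j = A' j)
    (hB : ∀ l j, l ≠ i → j ≠ i → B l j = B' l j)
    (hBs : ∀ l j, l ≠ j → B l j = B j l)
    (hB's : ∀ l j, l ≠ j → B' l j = B' j l) :
    (A i + c i * ∑ j ∈ Finset.univ.erase i, B i j)
      - (A' i + c i * ∑ j ∈ Finset.univ.erase i, B' i j)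
    = (1 / ∏ j ∈ Finset.univ.erase i, c j)
        * ((∑ l, (∏ j ∈ Finset.univ.erase l, c j) * A l
            + (∏ l, c l) * ∑ l, ∑ j ∈ Finset.univ.filter (fun j => l < j), B l j)
          - (∑ l, (∏ j ∈ Finset.univ.erase l, c j) * A' l
            + (∏ l, c l) * ∑ l, ∑ j ∈ Finset.univ.filter (fun j => l < j), B' l j)) := by
  set P := ∏ j ∈ Finset.univ.erase i, c j with hP
  have hPpos : 0 < P := Finset.prod_pos (fun j _ => hc j)
  have hPne : P ≠ 0 := ne_of_gt hPpos
  have hcP : c i * P = ∏ l, c l := Finset.mul_prod_erase Finset.univ c (Finset.mem_univ i)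
  have hAdiff : ∑ l, (∏ j ∈ Finset.univ.erase l, c j) * A l
      - ∑ l, (∏ j ∈ Finset.univ.erase l, c j) * A' l = P * (A i - A' i) := by
    rw [← Finset.sum_sub_distrib]
    rw [Finset.sum_eq_single i]
    · ring
    · intro b _ hb; rw [hA b hb]; ring
    · intro h; exact absurd (Finset.mem_univ i) h
  have hD := double_sum_eq i (fun l j => B l j - B' l j)
    (fun l j hl hj => by rw [hB l j hl hj]; ring)
    (fun l j hlj => by rw [hBs l j hlj, hB's l j hlj])
  have hBdiff : (∑ l, ∑ j ∈ Finset.univ.filter (fun j => l < j), B l j)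
      - ∑ l, ∑ j ∈ Finset.univ.filter (fun j => l < j), B' l j
      = (∑ j ∈ Finset.univ.erase i, B i j) - ∑ j ∈ Finset.univ.erase i, B' i j := by
    rw [← Finset.sum_sub_distrib]
    simp only [← Finset.sum_sub_distrib]
    rw [hD, Finset.sum_sub_distrib]
  calc (A i + c i * ∑ j ∈ Finset.univ.erase i, B i j)
      - (A' i + c i * ∑ j ∈ Finset.univ.erase i, B' i j)
      = (1/P) * (P * (A i - A' i)
        + (c i * P) * ((∑ j ∈ Finset.univ.erase i, B i j)
          - ∑ j ∈ Finset.univ.erase i, B' i j)) := by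
        field_simp; ring
    _ = _ := by rw [hcP, ← hAdiff, ← hBdiff]; ring



/-- Lemma 4 of the paper: a multi-agent interaction in which each agent
`i` treats all other agents with the same coefficient `cⁱ_k` and the inter-agent costs
are symmetric is a weighted potential dynamic game with weights
`wⁱ_k = 1/∏_{j≠i} cʲ_k`. -/
theorem multiagent_own_coefficient_weighted_potential_game
    {N : ℕ} (hN : 1 ≤ N) (T : ℕ) (hT : 1 ≤ T)
    (X U : Fin N → Type*)
    (Lii : Fin T → ∀ i : Fin N, X i × U i → ℝ)
    (Lij : Fin T → ∀ i j : Fin N, X i × X j → ℝ)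
    (LiiT : ∀ i : Fin N, X i → ℝ)
    (LijT : ∀ i j : Fin N, X i × X j → ℝ)
    (hsym : ∀ (k : Fin T) (i j : Fin N), i ≠ j → ∀ (a : X i) (b : X j),
      Lij k i j (a, b) = Lij k j i (b, a))
    (hsymT : ∀ (i j : Fin N), i ≠ j → ∀ (a : X i) (b : X j),
      LijT i j (a, b) = LijT j i (b, a))
    (c : Fin (N) → Fin (T + 1) → ℝ) (hc : ∀ i k, 0 < c i k) :
    ∀ i : Fin N,
      ∀ (x x' : Fin (T + 1) → ∀ j, X j) (u u' : Fin T → ∀ j, U j),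
        (∀ (k : Fin (T + 1)) (j : Fin N), j ≠ i → x k j = x' k j) →
        (∀ (k : Fin T) (j : Fin N), j ≠ i → u k j = u' k j) →
        -- Jⁱ at the first trajectory minus Jⁱ at the second
        (LiiT i (x (Fin.last T) i)
            + c i (Fin.last T)
                * ∑ j ∈ Finset.univ.erase i, LijT i j (x (Fin.last T) i, x (Fin.last T) j)
            + ∑ k : Fin T, (Lii k i (x k.castSucc i, u k i)
                + c i k.castSucc
                    * ∑ j ∈ Finset.univ.erase i, Lij k i j (x k.castSucc i, x k.castSucc j)))
          - (LiiT i (x' (Fin.last T) i)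
            + c i (Fin.last T)
                * ∑ j ∈ Finset.univ.erase i, LijT i j (x' (Fin.last T) i, x' (Fin.last T) j)
            + ∑ k : Fin T, (Lii k i (x' k.castSucc i, u' k i)
                + c i k.castSucc
                    * ∑ j ∈ Finset.univ.erase i, Lij k i j (x' k.castSucc i, x' k.castSucc j)))
        = (1 / ∏ j ∈ Finset.univ.erase i, c j (Fin.last T))
            * ((∑ l : Fin N, (∏ j ∈ Finset.univ.erase l, c j (Fin.last T))
                    * LiiT l (x (Fin.last T) l)
                + (∏ l : Fin N, c l (Fin.last T))
                    * ∑ l : Fin N, ∑ j ∈ Finset.univ.filter (fun j => l < j),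
                        LijT l j (x (Fin.last T) l, x (Fin.last T) j))
              - (∑ l : Fin N, (∏ j ∈ Finset.univ.erase l, c j (Fin.last T))
                    * LiiT l (x' (Fin.last T) l)
                + (∏ l : Fin N, c l (Fin.last T))
                    * ∑ l : Fin N, ∑ j ∈ Finset.univ.filter (fun j => l < j),
                        LijT l j (x' (Fin.last T) l, x' (Fin.last T) j)))
          + ∑ k : Fin T, (1 / ∏ j ∈ Finset.univ.erase i, c j k.castSucc)
              * ((∑ l : Fin N, (∏ j ∈ Finset.univ.erase l, c j k.castSucc)
                      * Lii k l (x k.castSucc l, u k l)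
                  + (∏ l : Fin N, c l k.castSucc)
                      * ∑ l : Fin N, ∑ j ∈ Finset.univ.filter (fun j => l < j),
                          Lij k l j (x k.castSucc l, x k.castSucc j))
                - (∑ l : Fin N, (∏ j ∈ Finset.univ.erase l, c j k.castSucc)
                      * Lii k l (x' k.castSucc l, u' k l)
                  + (∏ l : Fin N, c l k.castSucc)
                      * ∑ l : Fin N, ∑ j ∈ Finset.univ.filter (fun j => l < j),
                          Lij k l j (x' k.castSucc l, x' k.castSucc j))) := by
  intro i x x' u u' hx hu
  have hterm :
      (LiiT i (x (Fin.last T) i)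
          + c i (Fin.last T)
              * ∑ j ∈ Finset.univ.erase i, LijT i j (x (Fin.last T) i, x (Fin.last T) j))
        - (LiiT i (x' (Fin.last T) i)
          + c i (Fin.last T)
              * ∑ j ∈ Finset.univ.erase i, LijT i j (x' (Fin.last T) i, x' (Fin.last T) j))
      = (1 / ∏ j ∈ Finset.univ.erase i, c j (Fin.last T))
          * ((∑ l : Fin N, (∏ j ∈ Finset.univ.erase l, c j (Fin.last T))
                  * LiiT l (x (Fin.last T) l)
              + (∏ l : Fin N, c l (Fin.last T))
                  * ∑ l : Fin N, ∑ j ∈ Finset.univ.filter (fun j => l < j),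
                      LijT l j (x (Fin.last T) l, x (Fin.last T) j))
            - (∑ l : Fin N, (∏ j ∈ Finset.univ.erase l, c j (Fin.last T))
                  * LiiT l (x' (Fin.last T) l)
              + (∏ l : Fin N, c l (Fin.last T))
                  * ∑ l : Fin N, ∑ j ∈ Finset.univ.filter (fun j => l < j),
                      LijT l j (x' (Fin.last T) l, x' (Fin.last T) j))) :=
    stage_diff i (fun j => c j (Fin.last T)) (fun j => hc j _)
      (fun l => LiiT l (x (Fin.last T) l)) (fun l => LiiT l (x' (Fin.last T) l))
      (fun l j => LijT l j (x (Fin.last T) l, x (Fin.last T) j))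
      (fun l j => LijT l j (x' (Fin.last T) l, x' (Fin.last T) j))
      (fun j hj => by rw [hx _ j hj])
      (fun l j hl hj => by rw [hx _ l hl, hx _ j hj])
      (fun l j hlj => hsymT l j hlj _ _)
      (fun l j hlj => hsymT l j hlj _ _)
  have hstage : ∀ k : Fin T,
      (Lii k i (x k.castSucc i, u k i)
          + c i k.castSucc
              * ∑ j ∈ Finset.univ.erase i, Lij k i j (x k.castSucc i, x k.castSucc j))
        - (Lii k i (x' k.castSucc i, u' k i)
          + c i k.castSucc
              * ∑ j ∈ Finset.univ.erase i, Lij k i j (x' k.castSucc i, x' k.castSucc j))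
      = (1 / ∏ j ∈ Finset.univ.erase i, c j k.castSucc)
          * ((∑ l : Fin N, (∏ j ∈ Finset.univ.erase l, c j k.castSucc)
                  * Lii k l (x k.castSucc l, u k l)
              + (∏ l : Fin N, c l k.castSucc)
                  * ∑ l : Fin N, ∑ j ∈ Finset.univ.filter (fun j => l < j),
                      Lij k l j (x k.castSucc l, x k.castSucc j))
            - (∑ l : Fin N, (∏ j ∈ Finset.univ.erase l, c j k.castSucc)
                  * Lii k l (x' k.castSucc l, u' k l)
              + (∏ l : Fin N, c l k.castSucc)
                  * ∑ l : Fin N, ∑ j ∈ Finset.univ.filter (fun j => l < j),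
                      Lij k l j (x' k.castSucc l, x' k.castSucc j))) := fun k =>
    stage_diff i (fun j => c j k.castSucc) (fun j => hc j _)
      (fun l => Lii k l (x k.castSucc l, u k l)) (fun l => Lii k l (x' k.castSucc l, u' k l))
      (fun l j => Lij k l j (x k.castSucc l, x k.castSucc j))
      (fun l j => Lij k l j (x' k.castSucc l, x' k.castSucc j))
      (fun j hj => by rw [hx _ j hj, hu k j hj])
      (fun l j hl hj => by rw [hx _ l hl, hx _ j hj])
      (fun l j hlj => hsym k l j hlj _ _)
      (fun l j hlj => hsym k l j hlj _ _)
  rw [← hterm]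
  have hsum : ∑ k : Fin T, (1 / ∏ j ∈ Finset.univ.erase i, c j k.castSucc)
        * ((∑ l : Fin N, (∏ j ∈ Finset.univ.erase l, c j k.castSucc)
                * Lii k l (x k.castSucc l, u k l)
            + (∏ l : Fin N, c l k.castSucc)
                * ∑ l : Fin N, ∑ j ∈ Finset.univ.filter (fun j => l < j),
                    Lij k l j (x k.castSucc l, x k.castSucc j))
          - (∑ l : Fin N, (∏ j ∈ Finset.univ.erase l, c j k.castSucc)
                * Lii k l (x' k.castSucc l, u' k l)
            + (∏ l : Fin N, c l k.castSucc)
                * ∑ l : Fin N, ∑ j ∈ Finset.univ.filter (fun j => l < j),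
                    Lij k l j (x' k.castSucc l, x' k.castSucc j)))
      = ∑ k : Fin T,
        ((Lii k i (x k.castSucc i, u k i)
            + c i k.castSucc
                * ∑ j ∈ Finset.univ.erase i, Lij k i j (x k.castSucc i, x k.castSucc j))
          - (Lii k i (x' k.castSucc i, u' k i)
            + c i k.castSucc
                * ∑ j ∈ Finset.univ.erase i, Lij k i j (x' k.castSucc i, x' k.castSucc j))) :=
    Finset.sum_congr rfl (fun k _ => (hstage k).symm)
  rw [hsum, Finset.sum_sub_distrib]
  ring
end

section
/- Fix N ≥ 1 and for each i ∈ Fin N types X_i (states) and U_i (actions). Let L^{ii} : X_i × U_i → ℝ for each i, let L^{ij} : X_i × X_j → ℝ for each pair i ≠ j with the symmetry L^{ij}(a,b) = L^{ji}(b,a), and let c_i > 0 be real numbers. Define agent i's stage cost L^i(x,u) = L^{ii}(x_i,u_i) + Σ_{j≠i} c_j·L^{ij}(x_i,x_j) and the potential stage cost L(x,u) = Σ_i c_i·L^{ii}(x_i,u_i) + Σ_{i<j} c_i·c_j·L^{ij}(x_i,x_j). Then for every i ∈ Fin N there exists a function Θ_i of the tuple ((x_j,u_j))_{j≠i} such that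 L^i(x,u) = (1/c_i)·L(x,u) + Θ_i((x_j)_{j≠i},(u_j)_{j≠i}) for all x ∈ Π_j X_j and u ∈ Π_j U_j. -/
/-- stage-wise decomposition underlying Lemma 5 of the paper: when every
agent treats agent `j` with the same positive coefficient `c j`, and inter-agent costs
are symmetric, each agent's stage cost equals `(1/c i)` times a common potential stage
cost plus a term independent of the agent's own state and action. -/
theorem multiagent_other_coefficient_stagewise_decomposition
    {N : ℕ} (hN : 1 ≤ N)
    (X U : Fin N → Type*)
    (Lii : ∀ i : Fin N, X i × U i → ℝ)
    (Lij : ∀ i j : Fin N, X i × X j → ℝ)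
    (hsym : ∀ (i j : Fin N), i ≠ j → ∀ (a : X i) (b : X j), Lij i j (a, b) = Lij j i (b, a))
    (c : Fin N → ℝ) (hc : ∀ i, 0 < c i) :
    ∀ i : Fin N,
      ∃ Θ : ((j : {j : Fin N // j ≠ i}) → X j.1) → ((j : {j : Fin N // j ≠ i}) → U j.1) → ℝ,
        ∀ (x : ∀ j, X j) (u : ∀ j, U j),
          Lii i (x i, u i) + ∑ j ∈ Finset.univ.erase i, c j * Lij i j (x i, x j)
            = (1 / c i)
                * (∑ l : Fin N, c l * Lii l (x l, u l)
                   + ∑ l : Fin N, ∑ j ∈ Finset.univ.filter (fun j => l < j),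
                       c l * c j * Lij l j (x l, x j))
              + Θ (fun j => x j.1) (fun j => u j.1) := by
  intro i
  refine ⟨fun xo uo => -(1 / c i) *
    (∑ l : {j : Fin N // j ≠ i}, (c l.1 * Lii l.1 (xo l, uo l)
      + ∑ j : {j : Fin N // j ≠ i},
          if l.1 < j.1 then c l.1 * c j.1 * Lij l.1 j.1 (xo l, xo j) else 0)), ?_⟩
  intro x u
  have hci : c i ≠ 0 := (hc i).ne'
  -- convert subtype sums to erase sums
  have hmem : ∀ l : Fin N, l ∈ Finset.univ.erase i ↔ l ≠ i := by
    intro l; simp [Finset.mem_erase]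
  have hsub : ∀ F : Fin N → ℝ,
      (∑ l : {j : Fin N // j ≠ i}, F l.1) = ∑ l ∈ Finset.univ.erase i, F l := by
    intro F
    exact (Finset.sum_subtype (Finset.univ.erase i) hmem F).symm
  have houter :
      (∑ l : {j : Fin N // j ≠ i}, (c l.1 * Lii l.1 (x l.1, u l.1)
        + ∑ j : {j : Fin N // j ≠ i},
            if l.1 < j.1 then c l.1 * c j.1 * Lij l.1 j.1 (x l.1, x j.1) else 0))
      = ∑ l ∈ Finset.univ.erase i, (c l * Lii l (x l, u l)
        + ∑ j ∈ Finset.univ.erase i,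
            if l < j then c l * c j * Lij l j (x l, x j) else 0) := by
    rw [hsub fun l => (c l * Lii l (x l, u l)
        + ∑ j : {j : Fin N // j ≠ i},
            if l < j.1 then c l * c j.1 * Lij l j.1 (x l, x j.1) else 0)]
    refine Finset.sum_congr rfl fun l _ => ?_
    rw [hsub fun j => if l < j then c l * c j * Lij l j (x l, x j) else 0]
  beta_reduce
  rw [houter]
  -- abbreviations
  set t : Fin N → Fin N → ℝ :=
    fun l j => if l < j then c l * c j * Lij l j (x l, x j) else 0 with ht
  have ht' : ∀ l j : Fin N,
      (if l < j then c l * c j * Lij l j (x l, x j) else 0) = t l j := fun _ _ => rfl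
  simp only [ht']
  -- rewrite filtered sums as if-sums
  have hfil : ∀ l : Fin N,
      (∑ j ∈ Finset.univ.filter (fun j => l < j), c l * c j * Lij l j (x l, x j))
      = ∑ j : Fin N, t l j := by
    intro l; rw [Finset.sum_filter]
  simp only [hfil]
  -- split sums at i
  have hA : (∑ l : Fin N, c l * Lii l (x l, u l))
      = c i * Lii i (x i, u i) + ∑ l ∈ Finset.univ.erase i, c l * Lii l (x l, u l) :=
    (Finset.add_sum_erase _ _ (Finset.mem_univ i)).symm
  have hB : (∑ l : Fin N, ∑ j : Fin N, t l j)
      = (∑ j : Fin N, t i j)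
        + ∑ l ∈ Finset.univ.erase i, (t l i + ∑ j ∈ Finset.univ.erase i, t l j) := by
    rw [← Finset.add_sum_erase _ (fun l => ∑ j : Fin N, t l j) (Finset.mem_univ i)]
    congr 1
    refine Finset.sum_congr rfl fun l _ => ?_
    exact (Finset.add_sum_erase _ (t l) (Finset.mem_univ i)).symm
  -- key cross-term identity
  have hcross : (∑ j : Fin N, t i j) + (∑ l ∈ Finset.univ.erase i, t l i)
      = c i * ∑ j ∈ Finset.univ.erase i, c j * Lij i j (x i, x j) := by
    have h1 : (∑ j : Fin N, t i j) = ∑ j ∈ Finset.univ.erase i, t i j := by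
      rw [← Finset.add_sum_erase _ (t i) (Finset.mem_univ i)]
      simp [ht]
    rw [h1, Finset.mul_sum, ← Finset.sum_add_distrib]
    refine Finset.sum_congr rfl fun j hj => ?_
    have hji : j ≠ i := (Finset.mem_erase.mp hj).1
    have hsymij : Lij j i (x j, x i) = Lij i j (x i, x j) := (hsym i j (Ne.symm hji) _ _).symm
    rcases lt_trichotomy i j with h | h | h
    · have h2 : ¬ j < i := not_lt_of_gt h
      simp only [ht, if_pos h, if_neg h2]
      ring
    · exact absurd h.symm hji
    · have h2 : ¬ i < j := not_lt_of_gt h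
      simp only [ht, if_pos h, if_neg h2, hsymij]
      ring
  rw [hA, hB]
  simp only [Finset.sum_add_distrib]
  have e : (1 / c i) * c i = 1 := by field_simp
  linear_combination
    (-(Lii i (x i, u i) + ∑ j ∈ Finset.univ.erase i, c j * Lij i j (x i, x j))) * e
      - (1 / c i) * hcross
end

section
/- Let Γ₁ and Γ₂ be strategy sets, let F be a feasibility predicate on Γ₁ × Γ₂, let A : Γ₁ → ℝ, C : Γ₂ → ℝ, B : Γ₁ × Γ₂ → ℝ, and let c₁ > 0 and c₂ > 0 be real numbers. Define J¹(γ₁,γ₂) = A(γ₁) + c₁·B(γ₁,γ₂), J²(γ₁,γ₂) = C(γ₂) + c₂·B(γ₁,γ₂), and P(γ₁,γ₂) = c₂·A(γ₁) + c₁·C(γ₂) + c₁·c₂·B(γ₁,γ₂). Then every feasible (γ₁*,γ₂*) satisfying P(γ₁*,γ₂*) ≤ P(γ₁,γ₂) for all feasible (γ₁,γ₂) is a generalized Nash equilibrium: for every γ'₁ with (γ'₁,γ₂*) feasible, J¹(γ₁*,γ₂*) ≤ J¹(γ'₁,γ₂*), and for every γ'₂ with (γ₁*,γ'₂) feasible,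 J²(γ₁*,γ₂*) ≤ J²(γ₁*,γ'₂). -/
/-- Lemma 3 + Theorem 1 of the paper, constant coefficients: in a dyadic
interaction with costs `J¹ = A + c₁·B` and `J² = C + c₂·B`, a feasible minimizer of the
potential `P = c₂·A + c₁·C + c₁·c₂·B` over the feasible set is a generalized Nash
equilibrium. -/
theorem dyadic_potential_minimizer_is_GNE
    {Γ₁ Γ₂ : Type*}
    (F : Γ₁ × Γ₂ → Prop)
    (A : Γ₁ → ℝ) (C : Γ₂ → ℝ) (B : Γ₁ × Γ₂ → ℝ)
    (c₁ c₂ : ℝ) (hc₁ : 0 < c₁) (hc₂ : 0 < c₂) :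
    ∀ (γ₁s : Γ₁) (γ₂s : Γ₂), F (γ₁s, γ₂s) →
      (∀ (γ₁ : Γ₁) (γ₂ : Γ₂), F (γ₁, γ₂) →
        c₂ * A γ₁s + c₁ * C γ₂s + c₁ * c₂ * B (γ₁s, γ₂s)
          ≤ c₂ * A γ₁ + c₁ * C γ₂ + c₁ * c₂ * B (γ₁, γ₂)) →
      (∀ γ₁' : Γ₁, F (γ₁', γ₂s) →
        A γ₁s + c₁ * B (γ₁s, γ₂s) ≤ A γ₁' + c₁ * B (γ₁', γ₂s))
      ∧ (∀ γ₂' : Γ₂, F (γ₁s, γ₂') →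
        C γ₂s + c₂ * B (γ₁s, γ₂s) ≤ C γ₂' + c₂ * B (γ₁s, γ₂')) := by
  intro γ₁s γ₂s hF hmin
  constructor
  · intro γ₁' hF'
    have h := hmin γ₁' γ₂s hF'
    have := mul_le_mul_of_nonneg_left (by nlinarith : A γ₁s + c₁ * B (γ₁s, γ₂s) ≤ A γ₁' + c₁ * B (γ₁', γ₂s)) (le_of_lt hc₂)
    nlinarith
  · intro γ₂' hF'
    have h := hmin γ₁s γ₂' hF'
    nlinarith
end

section
/- Let N ≥ 1, let Γ_i be a strategy set for each i ∈ Fin N, let F be a feasibility predicate on Π_i Γ_i, let A_i : Γ_i → ℝ, let B_{ij} : Γ_i × Γ_j → ℝ for i ≠ j satisfy B_{ij}(a,b) = B_{ji}(b,a), and let c_i > 0 be real numbers. Define J^i(γ) = A_i(γ_i) + Σ_{j≠i} c_j·B_{ij}(γ_i,γ_j) and P(γ) = Σ_i c_i·A_i(γ_i) + Σ_{i<j} c_i·c_j·B_{ij}(γ_i,γ_j). Then every feasible γ* satisfying P(γ*) ≤ P(γ) for all feasible γ is a generalized Nash equilibrium: for every player i and every γ'_i such that the unilateral deviation of γ* by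 γ'_i is feasible, J^i(γ*) ≤ J^i of that deviation. -/
/-- Lemma 5 + Theorem 1 of the paper, constant coefficients: when each
agent `i`'s cost is `Jⁱ(γ) = A i (γ i) + ∑_{j≠i} c j · B i j (γ i, γ j)` with symmetric
pairwise costs, a feasible minimizer of the potential
`P(γ) = ∑ i c i·A i (γ i) + ∑_{i<j} c i·c j·B i j (γ i, γ j)` is a generalized Nash
equilibrium. -/
theorem multiagent_other_coefficient_potential_minimizer_is_GNE
    {N : ℕ} (hN : 1 ≤ N)
    (Γ : Fin N → Type*)
    (F : (∀ i, Γ i) → Prop)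
    (A : ∀ i : Fin N, Γ i → ℝ)
    (B : ∀ i j : Fin N, Γ i × Γ j → ℝ)
    (hsym : ∀ (i j : Fin N), i ≠ j → ∀ (a : Γ i) (b : Γ j), B i j (a, b) = B j i (b, a))
    (c : Fin N → ℝ) (hc : ∀ i, 0 < c i)
    (J : Fin N → (∀ i, Γ i) → ℝ)
    (hJ : ∀ (i : Fin N) (γ : ∀ j, Γ j),
      J i γ = A i (γ i) + ∑ j ∈ Finset.univ.erase i, c j * B i j (γ i, γ j))
    (P : (∀ i, Γ i) → ℝ)
    (hP : ∀ γ : ∀ i, Γ i,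
      P γ = ∑ i : Fin N, c i * A i (γ i)
        + ∑ i : Fin N, ∑ j ∈ Finset.univ.filter (fun j => i < j),
            c i * c j * B i j (γ i, γ j)) :
    ∀ γstar : ∀ i, Γ i, F γstar → (∀ γ, F γ → P γstar ≤ P γ) →
      ∀ (i : Fin N) (γ'i : Γ i), F (Function.update γstar i γ'i) →
        J i γstar ≤ J i (Function.update γstar i γ'i) := by
  classical
  intro γstar hF hmin i γ'i hF'
  set γ' : ∀ j, Γ j := Function.update γstar i γ'i with hγ'def
  have hupd : ∀ j, j ≠ i → γ' j = γstar j := fun j hj => Function.update_of_ne hj _ _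
  have hii : γ' i = γ'i := Function.update_self _ _ _
  have hPle : P γstar ≤ P γ' := hmin γ' hF'
  -- shorthand
  set h : Fin N → ℝ := fun j =>
    c j * (B i j (γ'i, γstar j) - B i j (γstar i, γstar j)) with hhdef
  set S : ℝ := ∑ j ∈ Finset.univ.erase i, h j with hSdef
  -- J difference
  have hJd : J i γ' - J i γstar = (A i γ'i - A i (γstar i)) + S := by
    have hs : ∑ j ∈ Finset.univ.erase i, c j * B i j (γ'i, γ' j)
        = (∑ j ∈ Finset.univ.erase i, c j * B i j (γstar i, γstar j)) + S := by
      rw [hSdef, ← Finset.sum_add_distrib]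
      refine Finset.sum_congr rfl fun j hj => ?_
      rw [hupd j (Finset.ne_of_mem_erase hj), hhdef]
      ring
    rw [hJ, hJ, hii, hs]
    ring
  -- A-part of P
  have hA : (∑ j : Fin N, c j * A j (γ' j)) - (∑ j : Fin N, c j * A j (γstar j))
      = c i * (A i γ'i - A i (γstar i)) := by
    rw [← Finset.add_sum_erase _ (fun j => c j * A j (γ' j)) (Finset.mem_univ i),
        ← Finset.add_sum_erase _ (fun j => c j * A j (γstar j)) (Finset.mem_univ i)]
    have heq : ∑ j ∈ Finset.univ.erase i, c j * A j (γ' j)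
        = ∑ j ∈ Finset.univ.erase i, c j * A j (γstar j) :=
      Finset.sum_congr rfl fun j hj => by rw [hupd j (Finset.ne_of_mem_erase hj)]
    rw [heq, hii]
    ring
  -- B-part of P
  set D : Fin N → Fin N → ℝ := fun j k =>
    c j * c k * B j k (γ' j, γ' k) - c j * c k * B j k (γstar j, γstar k) with hDdef
  have hD0 : ∀ j k : Fin N, j ≠ i → k ≠ i → D j k = 0 := by
    intro j k hj hk
    simp [hDdef, hupd j hj, hupd k hk]
  have hDi : ∀ k : Fin N, k ≠ i → D i k = c i * h k := by
    intro k hk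
    simp only [hDdef, hhdef, hii, hupd k hk]
    ring
  have hDj : ∀ j : Fin N, j ≠ i → D j i = c i * h j := by
    intro j hj
    simp only [hDdef, hhdef, hii, hupd j hj]
    rw [hsym j i hj (γstar j) γ'i, hsym j i hj (γstar j) (γstar i)]
    ring
  set g : Fin N → Fin N → ℝ := fun j k => if j < k then D j k else 0 with hgdef
  have hBdiff :
      (∑ j : Fin N, ∑ k ∈ Finset.univ.filter (fun k => j < k),
          c j * c k * B j k (γ' j, γ' k))
      - (∑ j : Fin N, ∑ k ∈ Finset.univ.filter (fun k => j < k),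
          c j * c k * B j k (γstar j, γstar k))
      = ∑ j : Fin N, ∑ k : Fin N, g j k := by
    rw [← Finset.sum_sub_distrib]
    refine Finset.sum_congr rfl fun j _ => ?_
    rw [← Finset.sum_sub_distrib, Finset.sum_filter]
  have hsplit : (∑ j : Fin N, ∑ k : Fin N, g j k)
      = (∑ k : Fin N, g i k) + ∑ j ∈ Finset.univ.erase i, g j i := by
    rw [← Finset.add_sum_erase _ (fun j => ∑ k : Fin N, g j k) (Finset.mem_univ i)]
    congr 1
    refine Finset.sum_congr rfl fun j hj => ?_
    have hjne : j ≠ i := Finset.ne_of_mem_erase hj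
    refine Finset.sum_eq_single i (fun k _ hk => ?_) (fun hi => absurd (Finset.mem_univ i) hi)
    simp [hgdef, hD0 j k hjne hk]
  have hgi : (∑ k : Fin N, g i k) = c i * ∑ k ∈ Finset.univ.filter (fun k => i < k), h k := by
    rw [Finset.mul_sum, ← Finset.sum_filter]
    refine Finset.sum_congr rfl fun k hk => ?_
    exact hDi k (ne_of_gt (Finset.mem_filter.mp hk).2)
  have hgj : (∑ j ∈ Finset.univ.erase i, g j i)
      = c i * ∑ j ∈ Finset.univ.filter (fun j => j < i), h j := by
    rw [Finset.mul_sum]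
    have he : ∑ j ∈ Finset.univ.erase i, g j i = ∑ j : Fin N, g j i :=
      Finset.sum_erase (f := fun j => g j i) Finset.univ (by simp [hgdef])
    rw [he, ← Finset.sum_filter]
    refine Finset.sum_congr rfl fun j hj => ?_
    exact hDj j (ne_of_lt (Finset.mem_filter.mp hj).2)
  have hpart : (∑ j ∈ Finset.univ.filter (fun j => j < i), h j)
      + (∑ k ∈ Finset.univ.filter (fun k => i < k), h k) = S := by
    rw [hSdef]
    have h1 : (Finset.univ.erase i) = Finset.univ.filter (fun j => j ≠ i) := by
      ext j; simp [Finset.mem_erase]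
    rw [h1, Finset.sum_filter, Finset.sum_filter, Finset.sum_filter, ← Finset.sum_add_distrib]
    refine Finset.sum_congr rfl fun j _ => ?_
    rcases lt_trichotomy j i with hlt | heq | hgt
    · simp [hlt, hlt.ne, not_lt_of_gt hlt]
    · simp [heq]
    · simp [hgt, hgt.ne', not_lt_of_gt hgt]
  -- key identity
  have key : P γ' - P γstar = c i * (J i γ' - J i γstar) := by
    rw [hP, hP, hJd]
    have : (∑ j : Fin N, c j * A j (γ' j)
        + ∑ j : Fin N, ∑ k ∈ Finset.univ.filter (fun k => j < k),
            c j * c k * B j k (γ' j, γ' k))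
      - (∑ j : Fin N, c j * A j (γstar j)
        + ∑ j : Fin N, ∑ k ∈ Finset.univ.filter (fun k => j < k),
            c j * c k * B j k (γstar j, γstar k))
      = c i * (A i γ'i - A i (γstar i)) + c i * S := by
      have := hBdiff
      rw [hsplit, hgi, hgj] at this
      rw [← hpart]
      linarith [hA, this]
    linarith [this]
  nlinarith [key, hPle, hc i]
end

section
/- Let N ≥ 1, let Γ_i be a strategy set for each i ∈ Fin N, let F be a feasibility predicate on Π_i Γ_i, let A_i : Γ_i → ℝ, let B_{ij} : Γ_i × Γ_j → ℝ for i ≠ j satisfy B_{ij}(a,b) = B_{ji}(b,a), and let c_i > 0 be real numbers. Define J^i(γ) = A_i(γ_i) + c_i·Σ_{j≠i} B_{ij}(γ_i,γ_j) and P(γ) = Σ_i (Π_{j≠i} c_j)·A_i(γ_i) + (Π_l c_l)·Σ_{i<j} B_{ij}(γ_i,γ_j). Then every feasible γ* satisfying P(γ*) ≤ P(γ) for all feasible γ is a generalized Nash equilibrium: for every player i and every γ'_i such that the unilateral deviation of γ* by γ'_i is feasible, J^i(γ*) ≤ J^i of that deviation. -/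
/-- Lemma 4 + Theorem 1 of the paper, constant coefficients: when each
agent `i`'s cost is `Jⁱ(γ) = A i (γ i) + c i · ∑_{j≠i} B i j (γ i, γ j)` with symmetric
pairwise costs, a feasible minimizer of the potential
`P(γ) = ∑ i (∏_{j≠i} c j)·A i (γ i) + (∏ l c l)·∑_{i<j} B i j (γ i, γ j)` is a
generalized Nash equilibrium. -/
theorem multiagent_own_coefficient_potential_minimizer_is_GNE
    {N : ℕ} (hN : 1 ≤ N)
    (Γ : Fin N → Type*)
    (F : (∀ i, Γ i) → Prop)
    (A : ∀ i : Fin N, Γ i → ℝ)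
    (B : ∀ i j : Fin N, Γ i × Γ j → ℝ)
    (hsym : ∀ (i j : Fin N), i ≠ j → ∀ (a : Γ i) (b : Γ j), B i j (a, b) = B j i (b, a))
    (c : Fin N → ℝ) (hc : ∀ i, 0 < c i)
    (J : Fin N → (∀ i, Γ i) → ℝ)
    (hJ : ∀ (i : Fin N) (γ : ∀ j, Γ j),
      J i γ = A i (γ i) + c i * ∑ j ∈ Finset.univ.erase i, B i j (γ i, γ j))
    (P : (∀ i, Γ i) → ℝ)
    (hP : ∀ γ : ∀ i, Γ i,
      P γ = ∑ i : Fin N, (∏ j ∈ Finset.univ.erase i, c j) * A i (γ i)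
        + (∏ l : Fin N, c l)
            * ∑ i : Fin N, ∑ j ∈ Finset.univ.filter (fun j => i < j),
                B i j (γ i, γ j)) :
    ∀ γstar : ∀ i, Γ i, F γstar → (∀ γ, F γ → P γstar ≤ P γ) →
      ∀ (i : Fin N) (γ'i : Γ i), F (Function.update γstar i γ'i) →
        J i γstar ≤ J i (Function.update γstar i γ'i) := by
  intro γstar hF hmin i γ'i hF'
  set γ' := Function.update γstar i γ'i with hγ'
  have hoff : ∀ j, j ≠ i → γ' j = γstar j := fun j hj => Function.update_of_ne hj _ _
  have hii : γ' i = γ'i := Function.update_self _ _ _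
  -- difference of pairwise costs
  set d : Fin N → Fin N → ℝ :=
    fun k l => B k l (γ' k, γ' l) - B k l (γstar k, γstar l) with hd
  have hd0 : ∀ k l, k ≠ i → l ≠ i → d k l = 0 := by
    intro k l hk hl
    simp [hd, hoff k hk, hoff l hl]
  have hdsymm : ∀ k l, k ≠ l → d k l = d l k := by
    intro k l hkl
    simp [hd, hsym k l hkl]
  have hw : (0:ℝ) < ∏ j ∈ Finset.univ.erase i, c j :=
    Finset.prod_pos (fun j _ => hc j)
  set w : ℝ := ∏ j ∈ Finset.univ.erase i, c j with hwdef
  have hC : (∏ l : Fin N, c l) = c i * w :=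
    (Finset.mul_prod_erase _ _ (Finset.mem_univ i)).symm
  -- L1: double sum of d over pairs equals sum over pairs containing i
  have L1 : ∑ k : Fin N, ∑ l ∈ Finset.univ.filter (fun l => k < l), d k l
      = ∑ j ∈ Finset.univ.erase i, d i j := by
    rw [← Finset.add_sum_erase _ _ (Finset.mem_univ i)]
    have hinner : ∀ k ∈ Finset.univ.erase i,
        ∑ l ∈ Finset.univ.filter (fun l => k < l), d k l
          = if k < i then d k i else 0 := by
      intro k hk
      have hki : k ≠ i := Finset.ne_of_mem_erase hk
      have step : ∀ l ∈ Finset.univ.filter (fun l => k < l),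
          d k l = if l = i then d k i else 0 := by
        intro l hl
        by_cases h : l = i
        · simp [h]
        · simp [h, hd0 k l hki h]
      rw [Finset.sum_congr rfl step, Finset.sum_ite_eq' _ i (fun _ => d k i)]
      simp
    rw [Finset.sum_congr rfl hinner]
    rw [← Finset.sum_filter]
    have hset : (Finset.univ.erase i).filter (fun k => k < i)
        = Finset.univ.filter (fun k => k < i) := by
      ext k; simp; intro h; exact ne_of_lt h
    rw [hset]
    have hsymterm : ∀ k ∈ Finset.univ.filter (fun k => k < i), d k i = d i k := by
      intro k hk
      simp only [Finset.mem_filter] at hk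
      exact hdsymm k i (ne_of_lt hk.2)
    rw [Finset.sum_congr rfl hsymterm]
    rw [← Finset.sum_filter_add_sum_filter_not (Finset.univ.erase i) (fun j => i < j) (d i)]
    congr 1
    · apply Finset.sum_congr _ (fun _ _ => rfl)
      ext j
      simp only [Finset.mem_filter, Finset.mem_erase, Finset.mem_univ, true_and, and_true,
        Fin.lt_iff_val_lt_val, Fin.ne_iff_vne]
      omega
    · apply Finset.sum_congr _ (fun _ _ => rfl)
      ext j
      simp only [Finset.mem_filter, Finset.mem_erase, Finset.mem_univ, true_and, and_true,
        Fin.lt_iff_val_lt_val, not_lt, Fin.ne_iff_vne]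
      omega
  -- L2: difference of A-sums
  have L2 : ∑ k : Fin N, (∏ j ∈ Finset.univ.erase k, c j) * A k (γ' k)
      - ∑ k : Fin N, (∏ j ∈ Finset.univ.erase k, c j) * A k (γstar k)
      = w * (A i (γ' i) - A i (γstar i)) := by
    rw [← Finset.add_sum_erase _ _ (Finset.mem_univ i),
        ← Finset.add_sum_erase _ (fun k => (∏ j ∈ Finset.univ.erase k, c j) * A k (γstar k))
          (Finset.mem_univ i)]
    have : ∀ k ∈ Finset.univ.erase i,
        (∏ j ∈ Finset.univ.erase k, c j) * A k (γ' k)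
          = (∏ j ∈ Finset.univ.erase k, c j) * A k (γstar k) := by
      intro k hk
      rw [hoff k (Finset.ne_of_mem_erase hk)]
    rw [Finset.sum_congr rfl this]
    ring
  -- key identity
  have key : P γ' - P γstar = w * (J i γ' - J i γstar) := by
    rw [hP γ', hP γstar, hJ i γ', hJ i γstar, hC]
    have hBdiff : (∑ k : Fin N, ∑ l ∈ Finset.univ.filter (fun l => k < l), B k l (γ' k, γ' l))
        - (∑ k : Fin N, ∑ l ∈ Finset.univ.filter (fun l => k < l), B k l (γstar k, γstar l))
        = ∑ j ∈ Finset.univ.erase i, d i j := by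
      rw [← L1, ← Finset.sum_sub_distrib]
      exact Finset.sum_congr rfl (fun k _ => (Finset.sum_sub_distrib _ _).symm)
    have hBdiff2 : (∑ j ∈ Finset.univ.erase i, B i j (γ' i, γ' j))
        - (∑ j ∈ Finset.univ.erase i, B i j (γstar i, γstar j))
        = ∑ j ∈ Finset.univ.erase i, d i j := (Finset.sum_sub_distrib _ _).symm
    linear_combination L2 + (c i * w) * hBdiff - (c i * w) * hBdiff2
  have hle := hmin γ' hF'
  have h0 : w * 0 ≤ w * (J i γ' - J i γstar) := by rw [mul_zero]; linarith
  have h2 := le_of_mul_le_mul_left h0 hw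
  linarith
end
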